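/- For a finite p-group P, the intersection of all powers of the augmentation ideal of the integral group ring ℤ[P] is zero. -/

import Mathlib

open Pointwise

namespace AugAuxProof

variable {p : ℕ}

noncomputable def augI (P : Type*) [Group P] : Submodule ℤ (MonoidAlgebra ℤ P) :=
  Submodule.restrictScalars ℤ
    (RingHom.ker ((MonoidAlgebra.lift ℤ ℤ P) 1 : MonoidAlgebra ℤ P →ₐ[ℤ] ℤ))

lemma mem_augI {P : Type*} [Group P] {x : MonoidAlgebra ℤ P} :
    x ∈ augI P ↔ (MonoidAlgebra.lift ℤ ℤ P) 1 x = 0 := Iff.rfl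

lemma mem_smul_top_iff {R A : Type*} [CommSemiring R] [AddCommMonoid A] [Module R A]
    {c : R} {x : A} :
    x ∈ c • (⊤ : Submodule R A) ↔ ∃ y, c • y = x := by
  constructor
  · intro h
    rw [← SetLike.mem_coe, Submodule.coe_pointwise_smul] at h
    obtain ⟨y, -, hy⟩ := Set.mem_smul_set.mp h
    exact ⟨y, hy⟩
  · rintro ⟨y, rfl⟩
    exact Submodule.smul_mem_pointwise_smul y c ⊤ trivial

variable {A : Type*} [Ring A]

lemma smul_top_mul_le (c : ℤ) (M : Submodule ℤ A) :
    (c • (⊤ : Submodule ℤ A)) * M ≤ c • (⊤ : Submodule ℤ A) := by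
  rw [Submodule.mul_le]
  intro m hm n hn
  obtain ⟨y, rfl⟩ := mem_smul_top_iff.mp hm
  exact mem_smul_top_iff.mpr ⟨y * n, (smul_mul_assoc c y n).symm⟩

lemma mul_smul_top_le (c : ℤ) (M : Submodule ℤ A) :
    M * (c • (⊤ : Submodule ℤ A)) ≤ c • (⊤ : Submodule ℤ A) := by
  rw [Submodule.mul_le]
  intro m hm n hn
  obtain ⟨y, rfl⟩ := mem_smul_top_iff.mp hn
  exact mem_smul_top_iff.mpr ⟨m * y, (mul_smul_comm c m y).symm⟩

lemma pow_mono {M N : Submodule ℤ A} (h : M ≤ N) : ∀ k : ℕ, M ^ k ≤ N ^ k := by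
  intro k
  induction k with
  | zero => simp
  | succ k ih => rw [pow_succ, pow_succ]; exact mul_le_mul' ih h

lemma smul_top_pow_le (c : ℤ) (k : ℕ) :
    (c • (⊤ : Submodule ℤ A)) ^ k ≤ c ^ k • (⊤ : Submodule ℤ A) := by
  induction k with
  | zero => simp
  | succ k ih =>
    rw [pow_succ, pow_succ]
    refine le_trans (mul_le_mul' ih le_rfl) ?_
    rw [Submodule.mul_le]
    intro m hm n hn
    obtain ⟨y, rfl⟩ := mem_smul_top_iff.mp hm
    obtain ⟨z, rfl⟩ := mem_smul_top_iff.mp hn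
    exact mem_smul_top_iff.mpr ⟨y * z, (smul_mul_smul_comm _ _ _ _).symm⟩

end AugAuxProof

open AugAuxProof Pointwise in
theorem AugAuxProof.key {p : ℕ} (hp : p.Prime) :
    ∀ (n : ℕ) (P : Type u) [Group P] [Finite P],
    Nat.card P = n → IsPGroup p P →
    ∃ m, 0 < m ∧ augI P ^ m ≤ (p : ℤ) • (⊤ : Submodule ℤ (MonoidAlgebra ℤ P)) := by
  haveI : Fact p.Prime := ⟨hp⟩
  intro n
  induction n using Nat.strong_induction_on with
  | _ n IH =>
  intro P _ _ hcard hP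
  rcases subsingleton_or_nontrivial P with hs | hnt
  · refine ⟨1, one_pos, ?_⟩
    rw [pow_one]
    intro x hx
    have h1 : x = MonoidAlgebra.single (1 : P) (x.coeff 1) := by
      ext b
      rw [Subsingleton.elim b (1 : P)]
      simp
    have hx1 : x.coeff 1 = 0 := by
      have h2 := mem_augI.mp hx
      rw [h1] at h2
      simpa using h2
    rw [h1, hx1, MonoidAlgebra.single_zero]
    exact Submodule.zero_mem _
  · -- central element of order p
    haveI : Nontrivial (Subgroup.center P) := hP.center_nontrivial
    have hpc : IsPGroup p (Subgroup.center P) := hP.to_subgroup _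
    have hdvd : p ∣ Nat.card (Subgroup.center P) := by
      obtain ⟨k, hk0, hk⟩ := hpc.nontrivial_iff_card.mp inferInstance
      exact hk ▸ dvd_pow_self p hk0.ne'
    obtain ⟨gc, hgc⟩ := exists_prime_orderOf_dvd_card' p hdvd
    set g : P := (gc : P) with hgdef
    have hgcen : g ∈ Subgroup.center P := gc.2
    have hgord : orderOf g = p := by
      rw [hgdef, Subgroup.orderOf_coe, hgc]
    set N : Subgroup P := Subgroup.zpowers g with hNdef
    have hle : N ≤ Subgroup.center P := Subgroup.zpowers_le.mpr hgcen
    haveI hN : N.Normal := by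
      constructor
      intro x hx h
      have hcomm : h * x = x * h := Subgroup.mem_center_iff.mp (hle hx) h
      have : h * x * h⁻¹ = x := by rw [hcomm, mul_inv_cancel_right]
      rw [this]; exact hx
    have hQcard : Nat.card (P ⧸ N) < n := by
      rw [← hcard, Subgroup.card_eq_card_quotient_mul_card_subgroup N]
      have h1 : Nat.card N = p := by rw [hNdef, Nat.card_zpowers, hgord]
      rw [h1]
      exact (Nat.lt_mul_iff_one_lt_right Nat.card_pos).mpr hp.one_lt
    obtain ⟨m, hm0, hm⟩ := IH _ hQcard (P ⧸ N) rfl (hP.to_quotient N)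
    -- the algebra map to the quotient
    set φ : MonoidAlgebra ℤ P →ₐ[ℤ] MonoidAlgebra ℤ (P ⧸ N) :=
      MonoidAlgebra.mapDomainAlgHom ℤ ℤ (QuotientGroup.mk' N) with hφdef
    have hφapply : ∀ x : MonoidAlgebra ℤ P,
        φ x = MonoidAlgebra.mapDomain (QuotientGroup.mk (s := N)) x := fun x => rfl
    have hφaug : Submodule.map φ.toLinearMap (augI P) ≤ augI (P ⧸ N) := by
      rintro _ ⟨x, hx, rfl⟩
      have hx' : ((MonoidAlgebra.lift ℤ ℤ P) 1) x = 0 := hx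
      show ((MonoidAlgebra.lift ℤ ℤ (P ⧸ N)) 1) (φ x) = 0
      have hcomp : (((MonoidAlgebra.lift ℤ ℤ (P ⧸ N)) 1).comp φ) = (MonoidAlgebra.lift ℤ ℤ P) 1 := by
        apply MonoidAlgebra.algHom_ext
        intro b
        simp [hφdef]
        exact Subsingleton.elim _ _
      calc ((MonoidAlgebra.lift ℤ ℤ (P ⧸ N)) 1) (φ x)
          = (((MonoidAlgebra.lift ℤ ℤ (P ⧸ N)) 1).comp φ) x := rfl
        _ = ((MonoidAlgebra.lift ℤ ℤ P) 1) x := by rw [hcomp]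
        _ = 0 := hx'
    have hφpow : ∀ x ∈ augI P ^ m, φ x ∈ augI (P ⧸ N) ^ m := by
      intro x hx
      have h1 : Submodule.map φ.toLinearMap (augI P ^ m) ≤ augI (P ⧸ N) ^ m := by
        rw [Submodule.map_pow]
        exact pow_mono hφaug m
      exact h1 ⟨x, hx, rfl⟩
    -- the central element δ = g - 1
    set a : MonoidAlgebra ℤ P := MonoidAlgebra.single g 1 with hadef
    set δ : MonoidAlgebra ℤ P := a - 1 with hδdef
    have hacomm : ∀ y : MonoidAlgebra ℤ P, a * y = y * a := by
      intro y
      induction y using MonoidAlgebra.induction_linear with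
      | zero => simp
      | add f g hf hg => rw [mul_add, add_mul, hf, hg]
      | single b c =>
        show a * MonoidAlgebra.single b c = MonoidAlgebra.single b c * a
        rw [hadef, MonoidAlgebra.single_mul_single, MonoidAlgebra.single_mul_single,
          one_mul, mul_one, Subgroup.mem_center_iff.mp hgcen b]
    have hδcomm : ∀ y : MonoidAlgebra ℤ P, δ * y = y * δ := by
      intro y
      rw [hδdef, sub_mul, mul_sub, one_mul, mul_one, hacomm]
    have hδpowcomm : ∀ (y : MonoidAlgebra ℤ P) (k : ℕ), δ ^ k * y = y * δ ^ k := by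
      intro y k
      exact ((Commute.pow_left (hδcomm y) k)).eq
    set J : Submodule ℤ (MonoidAlgebra ℤ P) :=
      LinearMap.range (LinearMap.mulRight ℤ δ) with hJdef
    have hJmem : ∀ y, y * δ ∈ J := fun y => LinearMap.mem_range.mpr ⟨y, rfl⟩
    have hJpow : ∀ k : ℕ, J ^ (k + 1) ≤
        LinearMap.range (LinearMap.mulRight ℤ (δ ^ (k + 1))) := by
      intro k
      induction k with
      | zero =>
        rw [pow_one]
        intro z hz
        obtain ⟨y, hy⟩ := LinearMap.mem_range.mp hz
        exact LinearMap.mem_range.mpr ⟨y, by simpa using hy⟩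
      | succ k ih =>
        rw [pow_succ]
        refine le_trans (mul_le_mul' ih le_rfl) ?_
        rw [Submodule.mul_le]
        intro u hu v hv
        obtain ⟨x, hx⟩ := LinearMap.mem_range.mp hu
        obtain ⟨y, hy⟩ := LinearMap.mem_range.mp hv
        refine LinearMap.mem_range.mpr ⟨x * y, ?_⟩
        have hxu : x * δ ^ (k + 1) = u := hx
        have hyv : y * δ = v := hy
        have hmid : δ ^ (k + 1) * (y * δ) = y * δ ^ (k + 1 + 1) := by
          rw [hδpowcomm (y * δ) (k + 1), mul_assoc, ← pow_succ']
        show (x * y) * δ ^ (k + 1 + 1) = u * v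
        rw [← hxu, ← hyv]
        calc (x * y) * δ ^ (k + 1 + 1) = x * (y * δ ^ (k + 1 + 1)) := by rw [mul_assoc]
          _ = x * (δ ^ (k + 1) * (y * δ)) := by rw [hmid]
          _ = (x * δ ^ (k + 1)) * (y * δ) := by rw [mul_assoc]
    -- δ ^ p lies in p • ⊤
    have hap : a ^ p = 1 := by
      rw [hadef, MonoidAlgebra.single_pow, one_pow, ← hgord, pow_orderOf_eq_one,
        MonoidAlgebra.one_def]
    have hδp : δ ^ p ∈ (p : ℤ) • (⊤ : Submodule ℤ (MonoidAlgebra ℤ P)) := by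
      have hcomm : Commute a (-1 : MonoidAlgebra ℤ P) := (Commute.one_right a).neg_right
      have hexp : δ ^ p = ∑ i ∈ Finset.range (p + 1),
          a ^ i * (-1 : MonoidAlgebra ℤ P) ^ (p - i) * (p.choose i : MonoidAlgebra ℤ P) := by
        have h := hcomm.add_pow p
        rw [hδdef, sub_eq_add_neg]
        exact h
      rw [hexp, Finset.sum_range_succ]
      obtain ⟨q, hq⟩ : ∃ q, p = q + 1 := ⟨p - 1, (Nat.succ_pred_eq_of_pos hp.pos).symm⟩
      have hsplit : ∑ i ∈ Finset.range p,
          a ^ i * (-1 : MonoidAlgebra ℤ P) ^ (p - i) * (p.choose i : MonoidAlgebra ℤ P)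
          = (∑ i ∈ Finset.range q,
              a ^ (i+1) * (-1 : MonoidAlgebra ℤ P) ^ (p - (i+1)) * (p.choose (i+1) : MonoidAlgebra ℤ P))
            + a ^ 0 * (-1 : MonoidAlgebra ℤ P) ^ (p - 0) * (p.choose 0 : MonoidAlgebra ℤ P) := by
        rw [hq]
        exact Finset.sum_range_succ' _ q
      rw [hsplit]
      have hmid : (∑ i ∈ Finset.range q,
          a ^ (i+1) * (-1 : MonoidAlgebra ℤ P) ^ (p - (i+1)) * (p.choose (i+1) : MonoidAlgebra ℤ P))
          ∈ (p : ℤ) • (⊤ : Submodule ℤ (MonoidAlgebra ℤ P)) := by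
        apply Submodule.sum_mem
        intro i hi
        have hi' : i + 1 < p := by
          rw [hq]; exact Nat.succ_lt_succ (Finset.mem_range.mp hi)
        obtain ⟨c, hc⟩ := hp.dvd_choose_self (Nat.succ_ne_zero i) hi'
        refine mem_smul_top_iff.mpr
          ⟨a ^ (i+1) * (-1 : MonoidAlgebra ℤ P) ^ (p - (i+1)) * (c : MonoidAlgebra ℤ P), ?_⟩
        rw [hc]
        rw [zsmul_eq_mul, Nat.cast_mul]
        push_cast
        rw [(Nat.cast_commute (α := MonoidAlgebra ℤ P) p
          (a ^ (i+1) * (-1 : MonoidAlgebra ℤ P) ^ (p - (i+1)))).left_comm]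
      have hend : a ^ p * (-1 : MonoidAlgebra ℤ P) ^ (p - p) * (p.choose p : MonoidAlgebra ℤ P)
          + a ^ 0 * (-1 : MonoidAlgebra ℤ P) ^ (p - 0) * (p.choose 0 : MonoidAlgebra ℤ P)
          ∈ (p : ℤ) • (⊤ : Submodule ℤ (MonoidAlgebra ℤ P)) := by
        rw [hap]
        simp only [Nat.sub_self, pow_zero, Nat.choose_self, Nat.choose_zero_right,
          Nat.cast_one, one_mul, mul_one, Nat.sub_zero]
        rcases hp.eq_two_or_odd' with h2 | hodd
        · rw [h2]
          refine mem_smul_top_iff.mpr ⟨1, ?_⟩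
          norm_num
        · rw [hodd.neg_one_pow]
          simp
      have : (∑ i ∈ Finset.range q,
          a ^ (i+1) * (-1 : MonoidAlgebra ℤ P) ^ (p - (i+1)) * (p.choose (i+1) : MonoidAlgebra ℤ P))
          + a ^ 0 * (-1 : MonoidAlgebra ℤ P) ^ (p - 0) * (p.choose 0 : MonoidAlgebra ℤ P)
          + a ^ p * (-1 : MonoidAlgebra ℤ P) ^ (p - p) * (p.choose p : MonoidAlgebra ℤ P)
          = (∑ i ∈ Finset.range q,
          a ^ (i+1) * (-1 : MonoidAlgebra ℤ P) ^ (p - (i+1)) * (p.choose (i+1) : MonoidAlgebra ℤ P))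
          + (a ^ p * (-1 : MonoidAlgebra ℤ P) ^ (p - p) * (p.choose p : MonoidAlgebra ℤ P)
          + a ^ 0 * (-1 : MonoidAlgebra ℤ P) ^ (p - 0) * (p.choose 0 : MonoidAlgebra ℤ P)) := by
        abel
      rw [this]
      exact Submodule.add_mem _ hmid hend
    have hJp : J ^ p ≤ (p : ℤ) • (⊤ : Submodule ℤ (MonoidAlgebra ℤ P)) := by
      obtain ⟨q, hq⟩ : ∃ q, p = q + 1 := ⟨p - 1, (Nat.succ_pred_eq_of_pos hp.pos).symm⟩
      rw [hq]
      refine le_trans (hJpow q) ?_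
      intro z hz
      obtain ⟨y, hy⟩ := LinearMap.mem_range.mp hz
      obtain ⟨w, hw⟩ := mem_smul_top_iff.mp (hq ▸ hδp)
      refine mem_smul_top_iff.mpr ⟨y * w, ?_⟩
      have : y * δ ^ (q + 1) = z := hy
      rw [← this, ← hw, mul_smul_comm]
    -- kernel of φ is contained in J
    have hker : ∀ x : MonoidAlgebra ℤ P, φ x = 0 → x ∈ J := by
      intro x hx
      have hrepr : x = ∑ b ∈ x.coeff.support,
          (MonoidAlgebra.single b (x.coeff b)
            - MonoidAlgebra.single ((QuotientGroup.mk b : P ⧸ N)).out (x.coeff b)) := by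
        rw [Finset.sum_sub_distrib]
        have h1 : ∑ b ∈ x.coeff.support, MonoidAlgebra.single b (x.coeff b) = x := by
          exact MonoidAlgebra.sum_coeff_single x
        have h2 : ∑ b ∈ x.coeff.support,
            MonoidAlgebra.single ((QuotientGroup.mk b : P ⧸ N)).out (x.coeff b)
            = MonoidAlgebra.mapDomain (fun b : P => ((QuotientGroup.mk b : P ⧸ N)).out) x := by
          apply MonoidAlgebra.coeff_injective
          rw [MonoidAlgebra.coeff_sum]
          rfl
        rw [h1, h2]
        have h3 : MonoidAlgebra.mapDomain (fun b : P => ((QuotientGroup.mk b : P ⧸ N)).out) x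
            = MonoidAlgebra.mapDomain Quotient.out
                (MonoidAlgebra.mapDomain (QuotientGroup.mk (s := N)) x) := by
          show MonoidAlgebra.ofCoeff _ = MonoidAlgebra.ofCoeff
            (Finsupp.mapDomain Quotient.out (Finsupp.mapDomain (QuotientGroup.mk (s := N)) x.coeff))
          rw [← Finsupp.mapDomain_comp]
          rfl
        rw [h3, ← hφapply, hx]
        simp
      rw [hrepr]
      apply Submodule.sum_mem
      intro b hb
      set b' : P := ((QuotientGroup.mk b : P ⧸ N)).out with hb'def
      have hbb' : b'⁻¹ * b ∈ N := by
        rw [← QuotientGroup.eq]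
        exact Quotient.out_eq _
      obtain ⟨j, hj⟩ : ∃ j : ℕ, g ^ j = b'⁻¹ * b := by
        have hfin : IsOfFinOrder g := isOfFinOrder_of_finite g
        obtain ⟨j, hj⟩ := hfin.mem_powers_iff_mem_zpowers.mpr hbb'
        exact ⟨j, hj⟩
      have key1 : MonoidAlgebra.single b (x.coeff b) - MonoidAlgebra.single b' (x.coeff b)
          = (MonoidAlgebra.single b' (x.coeff b) * (∑ i ∈ Finset.range j, a ^ i)) * δ := by
        have h5 : a ^ j - 1 = (∑ i ∈ Finset.range j, a ^ i) * δ := by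
          rw [hδdef, geom_sum_mul]
        have h6 : MonoidAlgebra.single b' (x.coeff b) * a ^ j = MonoidAlgebra.single b (x.coeff b) := by
          rw [hadef, MonoidAlgebra.single_pow, one_pow, MonoidAlgebra.single_mul_single,
            mul_one, hj, mul_inv_cancel_left]
        calc MonoidAlgebra.single b (x.coeff b) - MonoidAlgebra.single b' (x.coeff b)
            = MonoidAlgebra.single b' (x.coeff b) * (a ^ j - 1) := by
              rw [mul_sub, mul_one, h6]
          _ = MonoidAlgebra.single b' (x.coeff b) * ((∑ i ∈ Finset.range j, a ^ i) * δ) := by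
              rw [h5]
          _ = (MonoidAlgebra.single b' (x.coeff b) * (∑ i ∈ Finset.range j, a ^ i)) * δ := by
              rw [mul_assoc]
      rw [key1]
      exact hJmem _
    -- augI P ^ m ≤ p•⊤ ⊔ J
    have hstep : augI P ^ m ≤ ((p : ℤ) • (⊤ : Submodule ℤ (MonoidAlgebra ℤ P))) ⊔ J := by
      intro x hx
      have h1 : φ x ∈ (p : ℤ) • (⊤ : Submodule ℤ (MonoidAlgebra ℤ (P ⧸ N))) := hm (hφpow x hx)
      obtain ⟨y, hy⟩ := mem_smul_top_iff.mp h1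
      set y' : MonoidAlgebra ℤ P := MonoidAlgebra.mapDomain Quotient.out y with hy'def
      have hφy' : φ y' = y := by
        rw [hφapply, hy'def]
        show MonoidAlgebra.ofCoeff (Finsupp.mapDomain _ (Finsupp.mapDomain _ y.coeff)) = y
        rw [← Finsupp.mapDomain_comp]
        have : (QuotientGroup.mk (s := N)) ∘ (Quotient.out : P ⧸ N → P) = id := by
          funext q
          exact Quotient.out_eq q
        rw [this, Finsupp.mapDomain_id]
      have hx2 : x - (p : ℤ) • y' ∈ J := by
        apply hker
        rw [map_sub, map_smul, hφy', hy, sub_self]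
      have hxeq : x = (p : ℤ) • y' + (x - (p : ℤ) • y') := by abel
      rw [hxeq]
      exact Submodule.add_mem _
        (Submodule.mem_sup_left (mem_smul_top_iff.mpr ⟨y', rfl⟩))
        (Submodule.mem_sup_right hx2)
    -- (p•⊤ ⊔ J)^(k+1) ≤ p•⊤ ⊔ J^(k+1)
    have hsup : ∀ k : ℕ,
        (((p : ℤ) • (⊤ : Submodule ℤ (MonoidAlgebra ℤ P))) ⊔ J) ^ (k + 1)
          ≤ ((p : ℤ) • (⊤ : Submodule ℤ (MonoidAlgebra ℤ P))) ⊔ J ^ (k + 1) := by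
      intro k
      set K : Submodule ℤ (MonoidAlgebra ℤ P) := (p : ℤ) • ⊤ with hKdef
      induction k with
      | zero => rw [pow_one, pow_one]
      | succ k ih =>
        rw [pow_succ]
        refine le_trans (mul_le_mul' ih le_rfl) ?_
        rw [Submodule.sup_mul, Submodule.mul_sup, Submodule.mul_sup]
        refine sup_le (sup_le ?_ ?_) (sup_le ?_ ?_)
        · exact le_trans (smul_top_mul_le p _) le_sup_left
        · exact le_trans (smul_top_mul_le p _) le_sup_left
        · exact le_trans (mul_smul_top_le p _) le_sup_left
        · rw [← pow_succ]
          exact le_sup_right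
    -- conclude
    refine ⟨m * p, Nat.mul_pos hm0 hp.pos, ?_⟩
    rw [pow_mul]
    obtain ⟨q, hq⟩ : ∃ q, p = q + 1 := ⟨p - 1, (Nat.succ_pred_eq_of_pos hp.pos).symm⟩
    calc (augI P ^ m) ^ p
        ≤ (((p : ℤ) • (⊤ : Submodule ℤ (MonoidAlgebra ℤ P))) ⊔ J) ^ p := pow_mono hstep p
      _ ≤ ((p : ℤ) • (⊤ : Submodule ℤ (MonoidAlgebra ℤ P))) ⊔ J ^ p := by
          have h2 := hsup q
          rw [← hq] at h2
          exact h2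
      _ ≤ (p : ℤ) • (⊤ : Submodule ℤ (MonoidAlgebra ℤ P)) := sup_le le_rfl hJp

/-- For a finite `p`-group `P`, the intersection of all powers of the
augmentation ideal of `ℤ[P]` is zero. -/
theorem iInf_pow_augmentationIdeal_int_groupRing_of_pGroup_eq_bot
    {p : ℕ} (hp : p.Prime) (P : Type*) [Group P] [Finite P]
    (hP : IsPGroup p P) :
    ⨅ n : ℕ,
      (Submodule.restrictScalars ℤ
        (RingHom.ker ((MonoidAlgebra.lift ℤ ℤ P) 1 : MonoidAlgebra ℤ P →ₐ[ℤ] ℤ))) ^ n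
      = ⊥ := by
  obtain ⟨m, hm0, hm⟩ := AugAuxProof.key hp (Nat.card P) P rfl hP
  rw [eq_bot_iff]
  intro x hx
  rw [Submodule.mem_bot]
  simp only [Submodule.mem_iInf] at hx
  have hdvd : ∀ (k : ℕ) (b : P), (p : ℤ) ^ k ∣ x.coeff b := by
    intro k b
    have h1 : x ∈ AugAuxProof.augI P ^ (m * k) := hx (m * k)
    rw [pow_mul] at h1
    have h2 : x ∈ ((p : ℤ)) ^ k • (⊤ : Submodule ℤ (MonoidAlgebra ℤ P)) :=
      AugAuxProof.smul_top_pow_le (p : ℤ) k (AugAuxProof.pow_mono hm k h1)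
    obtain ⟨y, hy⟩ := AugAuxProof.mem_smul_top_iff.mp h2
    refine ⟨y.coeff b, ?_⟩
    rw [← hy, MonoidAlgebra.coeff_smul_apply, smul_eq_mul]
  ext b
  by_contra hne
  have habs : ∀ k : ℕ, p ^ k ∣ (x.coeff b).natAbs := by
    intro k
    have h1 : ((p ^ k : ℕ) : ℤ) ∣ x.coeff b := by push_cast; exact hdvd k b
    have h2 := Int.natAbs_dvd_natAbs.mpr h1
    rwa [Int.natAbs_natCast] at h2
  have hpos : 0 < (x.coeff b).natAbs := by
    simp only [MonoidAlgebra.coeff_zero, Finsupp.coe_zero, Pi.zero_apply] at hne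
    exact Int.natAbs_pos.mpr hne
  have hle : p ^ (x.coeff b).natAbs ≤ (x.coeff b).natAbs := Nat.le_of_dvd hpos (habs _)
  exact absurd hle (Nat.lt_pow_self (n := (x.coeff b).natAbs) hp.one_lt).not_ge
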